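/- The authentication goal of the simple example (Blanchet) protocol is false: there exists a bundle Υ = (Θ,→) that is a run of the protocol, together with messages a,b of sort A, s of sort S, d of sort D, and a strand z ∈ Dom(Θ) such that htin(Θ,z,2,resp(a,b,s,d)), non(Θ,a⁻¹), and non(Θ,b⁻¹) all hold, yet there are no a₀ of sort A, s₀ of sort S, d₀ of sort D, and z₀ ∈ Dom(Θ) with htin(Θ,z₀,1,init(a₀,b,s₀,d₀)). -/

import Mathlib

/-- The four sorts of the Simple Crypto Algebra signature. -/
inductive MSort : Type
  | top | A | S | D
deriving DecidableEq

/-- Message terms over a set `V` of variables (the free order-sorted algebra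
in canonical form; ground messages are `MTerm Empty`). -/
inductive MTerm (V : Type) : Type
  | var (v : V)
  | akey (i : ℕ) (b : Bool)   -- asymmetric key constants: `a_i` when `b = false`, `b_i` when `b = true`
  | skey (i : ℕ)              -- symmetric key constants `s_i`
  | data (i : ℕ)              -- data constants
  | invk (t : MTerm V)        -- key inverse (kept only where it cannot be reduced)
  | pair (t₀ t₁ : MTerm V)
  | enc (t k : MTerm V)

namespace MTerm

/-- The sort of a term (`none` when ill-sorted), given variable sorts `so`. -/
def srt {V : Type} (so : V → MSort) : MTerm V → Option MSort
  | var v => some (so v)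
  | akey _ _ => some .A
  | skey _ => some .S
  | data _ => some .D
  | invk t => match t.srt so with
      | some .A => some .A
      | some .S => some .S
      | _ => none
  | pair t₀ t₁ => match t₀.srt so, t₁.srt so with
      | some _, some _ => some .top
      | _, _ => none
  | enc t k => match t.srt so, k.srt so with
      | some _, some .A => some .top
      | some _, some .S => some .top
      | _, _ => none

/-- The key-inverse operation on canonical terms. -/
def invOp {V : Type} (so : V → MSort) : MTerm V → MTerm V
  | var v => if so v = .S then var v else invk (var v)
  | akey i b => akey i (!b)
  | skey i => skey i
  | invk t => t
  | t => invk t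

/-- Apply a substitution (an algebra homomorphism determined by its action on
variables), normalizing inverses; `so'` gives the sorts of target variables. -/
def subst {V W : Type} (so' : W → MSort) (σ : V → MTerm W) : MTerm V → MTerm W
  | var v => σ v
  | akey i b => akey i b
  | skey i => skey i
  | data i => data i
  | invk t => invOp so' (t.subst so' σ)
  | pair t₀ t₁ => pair (t₀.subst so' σ) (t₁.subst so' σ)
  | enc t k => enc (t.subst so' σ) (k.subst so' σ)

end MTerm

/-- Subsort relation: every sort is ≤ itself and ≤ ⊤. -/
def SLe (s₁ s₂ : MSort) : Prop := s₁ = s₂ ∨ s₂ = .top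

/-- `t` is a message of sort `s` (up to subsorting). -/
def HasSort {V : Type} (so : V → MSort) (t : MTerm V) (s : MSort) : Prop :=
  ∃ s', t.srt so = some s' ∧ SLe s' s

def WellSorted {V : Type} (so : V → MSort) (t : MTerm V) : Prop :=
  (t.srt so).isSome = true

/-- Atoms are the messages of sort A, S or D. -/
def IsAtomM {V : Type} (so : V → MSort) (t : MTerm V) : Prop :=
  t.srt so = some .A ∨ t.srt so = some .S ∨ t.srt so = some .D

/-- Sorting of ground (variable-free) terms. -/
def gSo : Empty → MSort := fun e => nomatch e

/-- Ground messages: the initial algebra. -/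
abbrev Msg := MTerm Empty

/-- The carried-by relation `t₀ ⊑ t₁`. -/
inductive Carries {V : Type} : MTerm V → MTerm V → Prop
  | refl (t) : Carries t t
  | pairL {t t₀ t₁} : Carries t t₀ → Carries t (.pair t₀ t₁)
  | pairR {t t₀ t₁} : Carries t t₁ → Carries t (.pair t₀ t₁)
  | encP {t t₀ k} : Carries t t₀ → Carries t (.enc t₀ k)
/-- Events: transmission `+t` or reception `−t`. -/
inductive EvtT (V : Type) : Type
  | send (t : MTerm V)
  | recv (t : MTerm V)

namespace EvtT

def msg {V : Type} : EvtT V → MTerm V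
  | send t => t
  | recv t => t

def IsSend {V : Type} : EvtT V → Prop
  | send _ => True
  | recv _ => False

def IsRecv {V : Type} : EvtT V → Prop
  | send _ => False
  | recv _ => True

def subst {V W : Type} (so' : W → MSort) (σ : V → MTerm W) : EvtT V → EvtT W
  | send t => send (t.subst so' σ)
  | recv t => recv (t.subst so' σ)

end EvtT

/-- A default event (used only for out-of-range indexing). -/
def dEvt {V : Type} : EvtT V := .send (.data 0)

/-- A strand space: a finite non-empty sequence of traces (finite non-empty
sequences of events); strands are indices into the sequence. -/
structure SSpaceT (V : Type) where
  tr : List (List (EvtT V))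
  nonnil : tr ≠ []
  ne : ∀ C ∈ tr, C ≠ []

namespace SSpaceT

variable {V : Type}

/-- The trace of strand `s`. -/
def trace (Θ : SSpaceT V) (s : ℕ) : List (EvtT V) := Θ.tr.getD s []

/-- `s` is a strand of `Θ`, i.e. a member of `Dom(Θ)`. -/
def IsStrand (Θ : SSpaceT V) (s : ℕ) : Prop := s < Θ.tr.length

/-- `n = (s, i)` is a node of `Θ`. -/
def IsNode (Θ : SSpaceT V) (n : ℕ × ℕ) : Prop :=
  n.1 < Θ.tr.length ∧ n.2 < (Θ.trace n.1).length

/-- The event at node `n`. -/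
def evt (Θ : SSpaceT V) (n : ℕ × ℕ) : EvtT V := (Θ.trace n.1).getD n.2 dEvt

end SSpaceT

/-- `t` originates in trace `C` at index `i`. -/
def OrigAt {V : Type} (C : List (EvtT V)) (t : MTerm V) (i : ℕ) : Prop :=
  i < C.length ∧ (C.getD i dEvt).IsSend ∧ Carries t (C.getD i dEvt).msg ∧
    ∀ j < i, ¬ Carries t (C.getD j dEvt).msg

/-- `t` is non-originating in `Θ`. -/
def SSpaceT.Non {V : Type} (Θ : SSpaceT V) (t : MTerm V) : Prop :=
  ∀ s, Θ.IsStrand s → ∀ i, ¬ OrigAt (Θ.trace s) t i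

/-- `t` uniquely originates in `Θ` at node `n`. -/
def SSpaceT.Uniq {V : Type} (Θ : SSpaceT V) (t : MTerm V) (n : ℕ × ℕ) : Prop :=
  Θ.IsStrand n.1 ∧ OrigAt (Θ.trace n.1) t n.2 ∧
    ∀ s i, Θ.IsStrand s → OrigAt (Θ.trace s) t i → s = n.1 ∧ i = n.2

/-- Strand succession edges `(s, i) ⇒ (s, i+1)`. -/
def SuccEdge {V : Type} (Θ : SSpaceT V) (n₀ n₁ : ℕ × ℕ) : Prop :=
  n₀.1 = n₁.1 ∧ n₁.2 = n₀.2 + 1 ∧ Θ.IsNode n₁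

/-- A bundle: a ground strand space together with communication edges forming,
with the strand-succession edges, a finite directed acyclic graph in which
every reception has a unique matching transmission. -/
structure Bundle where
  Θ : SSpaceT Empty
  comm : (ℕ × ℕ) → (ℕ × ℕ) → Prop
  comm_nodes : ∀ n₀ n₁, comm n₀ n₁ → Θ.IsNode n₀ ∧ Θ.IsNode n₁
  comm_evt : ∀ n₀ n₁, comm n₀ n₁ → ∃ t, Θ.evt n₀ = .send t ∧ Θ.evt n₁ = .recv t
  comm_uniq : ∀ n₁, Θ.IsNode n₁ → (Θ.evt n₁).IsRecv → ∃! n₀, comm n₀ n₁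
  acyclic : ∀ n, ¬ Relation.TransGen (fun m₀ m₁ => SuccEdge Θ m₀ m₁ ∨ comm m₀ m₁) n n

/-- The edge relation of a bundle. -/
def Bundle.edge (Υ : Bundle) (n₀ n₁ : ℕ × ℕ) : Prop :=
  SuccEdge Υ.Θ n₀ n₁ ∨ Υ.comm n₀ n₁

/-- The precedes relation `≺` of a bundle: the transitive closure of the edges. -/
def Bundle.prec (Υ : Bundle) : (ℕ × ℕ) → (ℕ × ℕ) → Prop :=
  Relation.TransGen Υ.edge
/-- A role item `r(C, N, U)`: a trace together with non-origination and
unique-origination assumption sequences of the same length. -/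
structure RoleItemT (V : Type) where
  C : List (EvtT V)
  N : List (Set (MTerm V))
  U : List (Set (MTerm V))
  ne : C ≠ []
  lenN : N.length = C.length
  lenU : U.length = C.length

/-- Apply a substitution to a role item. -/
def RoleItemT.subst {V W : Type} (so' : W → MSort) (σ : V → MTerm W)
    (r : RoleItemT V) : RoleItemT W where
  C := r.C.map (EvtT.subst so' σ)
  N := r.N.map (fun X => (MTerm.subst so' σ) '' X)
  U := r.U.map (fun X => (MTerm.subst so' σ) '' X)
  ne := by
    intro h
    have hl : r.C.length = 0 := by simpa using congrArg List.length h
    exact r.ne (List.length_eq_zero_iff.mp hl)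
  lenN := by simpa using r.lenN
  lenU := by simpa using r.lenU

/-- Strand `s` is an instance of role item `r` in `Θ`. -/
def InstOf {V : Type} (Θ : SSpaceT V) (s : ℕ) (r : RoleItemT V) : Prop :=
  Θ.IsStrand s ∧
  (Θ.trace s).length ≤ r.C.length ∧
  r.C.take (Θ.trace s).length = Θ.trace s ∧
  (∀ i < (Θ.trace s).length, ∀ t ∈ r.N.getD i ∅, Θ.Non t) ∧
  (∀ i < (Θ.trace s).length, ∀ t ∈ r.U.getD i ∅, Θ.Uniq t (s, i))

/-- `htin(Θ, z, h, r)`: strand `z` has height at least `h` and instantiates `r`. -/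
def Htin {V : Type} (Θ : SSpaceT V) (z h : ℕ) (r : RoleItemT V) : Prop :=
  h ≤ (Θ.trace z).length ∧ InstOf Θ z r

/-- A bundle is a run of the protocol `P` (a set of roles, i.e. of sets of
ground role items) when some role assignment makes each strand an instance of
a role item of its assigned role. -/
def RunOf (Υ : Bundle) (P : Set (Set (RoleItemT Empty))) : Prop :=
  ∃ rl : ℕ → Set (RoleItemT Empty),
    ∀ s, Υ.Θ.IsStrand s → rl s ∈ P ∧ ∃ r ∈ rl s, InstOf Υ.Θ s r
/-- Ground messages of sort A (asymmetric keys). -/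
def SortA (t : Msg) : Prop := t.srt gSo = some .A
/-- Ground messages of sort S (symmetric keys). -/
def SortS (t : Msg) : Prop := t.srt gSo = some .S
/-- Ground messages of sort D (data). -/
def SortD (t : Msg) : Prop := t.srt gSo = some .D

/-- Key inverse on ground messages. -/
def minv (t : Msg) : Msg := MTerm.invOp gSo t

/-- Adversary role item: create an atom out of thin air. -/
def createItem (t : Msg) : RoleItemT Empty where
  C := [.send t]
  N := [∅]
  U := [∅]
  ne := by simp
  lenN := rfl
  lenU := rfl

/-- Adversary role item: pairing. -/
def pairItem (t₀ t₁ : Msg) : RoleItemT Empty where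
  C := [.recv t₀, .recv t₁, .send (.pair t₀ t₁)]
  N := [∅, ∅, ∅]
  U := [∅, ∅, ∅]
  ne := by simp
  lenN := rfl
  lenU := rfl

/-- Adversary role item: separation. -/
def sepItem (t₀ t₁ : Msg) : RoleItemT Empty where
  C := [.recv (.pair t₀ t₁), .send t₀, .send t₁]
  N := [∅, ∅, ∅]
  U := [∅, ∅, ∅]
  ne := by simp
  lenN := rfl
  lenU := rfl

/-- Adversary role item: encryption. -/
def encItem (t k : Msg) : RoleItemT Empty where
  C := [.recv t, .recv k, .send (.enc t k)]
  N := [∅, ∅, ∅]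
  U := [∅, ∅, ∅]
  ne := by simp
  lenN := rfl
  lenU := rfl

/-- Adversary role item: decryption. -/
def decItem (t k : Msg) : RoleItemT Empty where
  C := [.recv (.enc t k), .recv (minv k), .send t]
  N := [∅, ∅, ∅]
  U := [∅, ∅, ∅]
  ne := by simp
  lenN := rfl
  lenU := rfl

def createRole : Set (RoleItemT Empty) :=
  { r | ∃ t : Msg, IsAtomM gSo t ∧ r = createItem t }
def pairRole : Set (RoleItemT Empty) :=
  { r | ∃ t₀ t₁ : Msg, WellSorted gSo t₀ ∧ WellSorted gSo t₁ ∧ r = pairItem t₀ t₁ }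
def sepRole : Set (RoleItemT Empty) :=
  { r | ∃ t₀ t₁ : Msg, WellSorted gSo t₀ ∧ WellSorted gSo t₁ ∧ r = sepItem t₀ t₁ }
def encRole : Set (RoleItemT Empty) :=
  { r | ∃ t k : Msg, WellSorted gSo t ∧ (SortA k ∨ SortS k) ∧ r = encItem t k }
def decRole : Set (RoleItemT Empty) :=
  { r | ∃ t k : Msg, WellSorted gSo t ∧ (SortA k ∨ SortS k) ∧ r = decItem t k }

/-- Initiator role item of the simple (Blanchet) example protocol:
`⟨+{{s}_{a⁻¹}}_b, −{d}_s⟩`, with `s` assumed uniquely originating at the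
first event. -/
def initItem (a b s d : Msg) : RoleItemT Empty where
  C := [.send (.enc (.enc s (minv a)) b), .recv (.enc d s)]
  N := [∅, ∅]
  U := [{s}, ∅]
  ne := by simp
  lenN := rfl
  lenU := rfl

/-- Responder role item of the simple (Blanchet) example protocol:
`⟨−{{s}_{a⁻¹}}_b, +{d}_s⟩`. -/
def respItem (a b s d : Msg) : RoleItemT Empty where
  C := [.recv (.enc (.enc s (minv a)) b), .send (.enc d s)]
  N := [∅, ∅]
  U := [∅, ∅]
  ne := by simp
  lenN := rfl
  lenU := rfl

def initRole : Set (RoleItemT Empty) :=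
  { r | ∃ a b s d : Msg, SortA a ∧ SortA b ∧ SortS s ∧ SortD d ∧ r = initItem a b s d }
def respRole : Set (RoleItemT Empty) :=
  { r | ∃ a b s d : Msg, SortA a ∧ SortA b ∧ SortS s ∧ SortD d ∧ r = respItem a b s d }

/-- The simple (Blanchet) example protocol, including the adversary roles. -/
def blanchetProt : Set (Set (RoleItemT Empty)) :=
  {initRole, respRole, createRole, pairRole, sepRole, encRole, decRole}

/- ===== Auxiliary development for the counterexample ===== -/

deriving instance DecidableEq for MTerm
deriving instance DecidableEq for EvtT

/-- Boolean carried-by test. -/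
def carB {V : Type} [DecidableEq V] : MTerm V → MTerm V → Bool
  | t, .pair t₀ t₁ => t = MTerm.pair t₀ t₁ || carB t t₀ || carB t t₁
  | t, .enc t₀ k => t = MTerm.enc t₀ k || carB t t₀
  | t, u => t = u

lemma carB_refl {V : Type} [DecidableEq V] (t : MTerm V) : carB t t = true := by
  cases t <;> simp [carB]

lemma carries_iff {V : Type} [DecidableEq V] {t u : MTerm V} :
    Carries t u ↔ carB t u = true := by
  constructor
  · intro h
    induction h with
    | refl => exact carB_refl _
    | pairL _ ih => simp [carB, ih]
    | pairR _ ih => simp [carB, ih]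
    | encP _ ih => simp [carB, ih]
  · intro h
    induction u with
    | pair t₀ t₁ ih₀ ih₁ =>
      simp only [carB, Bool.or_eq_true, decide_eq_true_eq] at h
      rcases h with (h | h) | h
      · exact h ▸ Carries.refl t
      · exact Carries.pairL (ih₀ h)
      · exact Carries.pairR (ih₁ h)
    | enc t₀ k ih₀ _ =>
      simp only [carB, Bool.or_eq_true, decide_eq_true_eq] at h
      rcases h with h | h
      · exact h ▸ Carries.refl t
      · exact Carries.encP (ih₀ h)
    | var v => simp only [carB, decide_eq_true_eq] at h; exact h ▸ Carries.refl t
    | akey i b => simp only [carB, decide_eq_true_eq] at h; exact h ▸ Carries.refl t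
    | skey i => simp only [carB, decide_eq_true_eq] at h; exact h ▸ Carries.refl t
    | data i => simp only [carB, decide_eq_true_eq] at h; exact h ▸ Carries.refl t
    | invk t' ih => simp only [carB, decide_eq_true_eq] at h; exact h ▸ Carries.refl t

instance {V : Type} [DecidableEq V] (t u : MTerm V) : Decidable (Carries t u) :=
  decidable_of_iff _ carries_iff.symm

instance {V : Type} (e : EvtT V) : Decidable e.IsSend := by
  cases e <;> simp [EvtT.IsSend] <;> infer_instance

instance {V : Type} (e : EvtT V) : Decidable e.IsRecv := by
  cases e <;> simp [EvtT.IsRecv] <;> infer_instance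

instance {V : Type} [DecidableEq V] (C : List (EvtT V)) (t : MTerm V) (i : ℕ) :
    Decidable (OrigAt C t i) := by
  unfold OrigAt; infer_instance

instance {V : Type} (Θ : SSpaceT V) (s : ℕ) : Decidable (Θ.IsStrand s) := by
  unfold SSpaceT.IsStrand; infer_instance

instance {V : Type} (Θ : SSpaceT V) (n : ℕ × ℕ) : Decidable (Θ.IsNode n) := by
  unfold SSpaceT.IsNode; infer_instance

/- The concrete messages of the attack. -/
def tA : Msg := .akey 0 false
def tB : Msg := .akey 1 false
def tB' : Msg := .akey 2 false
def tBi' : Msg := .akey 2 true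
def tS : Msg := .skey 0
def tD : Msg := .data 0
def tAi : Msg := .akey 0 true
def tM : Msg := .enc tS tAi
def tE1 : Msg := .enc tM tB'
def tE2 : Msg := .enc tM tB
def tDS : Msg := .enc tD tS

/- Traces of the six strands. -/
def C0 : List (EvtT Empty) := [.send tE1, .recv tDS]             -- init(a,b',s,d)
def C1 : List (EvtT Empty) := [.send tBi']                       -- create(b'⁻¹)
def C2 : List (EvtT Empty) := [.recv tE1, .recv tBi', .send tM]  -- dec
def C3 : List (EvtT Empty) := [.recv tM, .recv tB, .send tE2]    -- enc
def C4 : List (EvtT Empty) := [.send tB]                         -- create(b)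
def C5 : List (EvtT Empty) := [.recv tE2, .send tDS]             -- resp(a,b,s,d)

def myΘ : SSpaceT Empty where
  tr := [C0, C1, C2, C3, C4, C5]
  nonnil := by simp
  ne := by intro C hC; fin_cases hC <;> simp [C0, C1, C2, C3, C4, C5]

def commL : List ((ℕ × ℕ) × (ℕ × ℕ)) :=
  [((0,0),(2,0)), ((1,0),(2,1)), ((2,2),(3,0)), ((4,0),(3,1)), ((3,2),(5,0)), ((5,1),(0,1))]

def myComm (n₀ n₁ : ℕ × ℕ) : Prop := (n₀, n₁) ∈ commL

instance (n₀ n₁ : ℕ × ℕ) : Decidable (myComm n₀ n₁) := by unfold myComm; infer_instance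

def rank : ℕ × ℕ → ℕ
  | (0,1) => 9
  | (2,0) => 1
  | (2,1) => 2
  | (2,2) => 3
  | (3,0) => 4
  | (3,1) => 5
  | (3,2) => 6
  | (5,0) => 7
  | (5,1) => 8
  | _ => 0

lemma myTrace : ∀ s, myΘ.trace s = [C0, C1, C2, C3, C4, C5].getD s [] := fun _ => rfl

lemma len_le3 {x : ℕ} (hx : x < 6) : (myΘ.trace x).length ≤ 3 := by
  interval_cases x <;> decide

lemma rank_mono {n₀ n₁ : ℕ × ℕ} (h : SuccEdge myΘ n₀ n₁ ∨ myComm n₀ n₁) :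
    rank n₀ < rank n₁ := by
  rcases h with ⟨h1, h2, hx, hy⟩ | h
  · obtain ⟨x, y⟩ := n₁
    obtain ⟨x0, y0⟩ := n₀
    simp only at h1 h2 hx hy
    subst h1
    subst h2
    have hx6 : x0 < 6 := by simpa [myΘ] using hx
    have hy2 : y0 < 2 := by have := lt_of_lt_of_le hy (len_le3 hx6); omega
    interval_cases x0 <;> interval_cases y0 <;>
      first
        | exact absurd hy (by decide)
        | decide
  · simp only [myComm, commL, List.mem_cons, List.not_mem_nil, or_false] at h
    rcases h with h | h | h | h | h | h <;> rw [Prod.ext_iff] at h <;>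
      obtain ⟨h1, h2⟩ := h <;> subst h1 <;> subst h2 <;> decide

def myBundle : Bundle where
  Θ := myΘ
  comm := myComm
  comm_nodes := by
    intro n₀ n₁ h
    simp only [myComm, commL, List.mem_cons, List.not_mem_nil, or_false] at h
    rcases h with h | h | h | h | h | h <;> rw [Prod.ext_iff] at h <;>
      obtain ⟨h1, h2⟩ := h <;> subst h1 <;> subst h2 <;> exact ⟨by decide, by decide⟩
  comm_evt := by
    intro n₀ n₁ h
    simp only [myComm, commL, List.mem_cons, List.not_mem_nil, or_false] at h
    rcases h with h | h | h | h | h | h <;> rw [Prod.ext_iff] at h <;>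
      obtain ⟨h1, h2⟩ := h <;> subst h1 <;> subst h2 <;> exact ⟨_, rfl, rfl⟩
  comm_uniq := by
    intro n₁ hn hr
    obtain ⟨x, y⟩ := n₁
    obtain ⟨hx, hy⟩ := hn
    have hx6 : x < 6 := by simpa [myΘ] using hx
    have hy3 : y < 3 := lt_of_lt_of_le hy (len_le3 hx6)
    interval_cases x <;> interval_cases y <;>
      first
        | exact absurd hy (by decide)
        | exact absurd hr (by decide)
        | (refine ⟨(0,0), by decide, ?_⟩
           rintro ⟨u, v⟩ hy'
           simp only [myComm, commL, List.mem_cons, Prod.mk.injEq,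
             List.not_mem_nil, or_false] at hy'
           simp only [Prod.mk.injEq]
           omega)
        | (refine ⟨(1,0), by decide, ?_⟩
           rintro ⟨u, v⟩ hy'
           simp only [myComm, commL, List.mem_cons, Prod.mk.injEq,
             List.not_mem_nil, or_false] at hy'
           simp only [Prod.mk.injEq]
           omega)
        | (refine ⟨(2,2), by decide, ?_⟩
           rintro ⟨u, v⟩ hy'
           simp only [myComm, commL, List.mem_cons, Prod.mk.injEq,
             List.not_mem_nil, or_false] at hy'
           simp only [Prod.mk.injEq]
           omega)
        | (refine ⟨(4,0), by decide, ?_⟩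
           rintro ⟨u, v⟩ hy'
           simp only [myComm, commL, List.mem_cons, Prod.mk.injEq,
             List.not_mem_nil, or_false] at hy'
           simp only [Prod.mk.injEq]
           omega)
        | (refine ⟨(3,2), by decide, ?_⟩
           rintro ⟨u, v⟩ hy'
           simp only [myComm, commL, List.mem_cons, Prod.mk.injEq,
             List.not_mem_nil, or_false] at hy'
           simp only [Prod.mk.injEq]
           omega)
        | (refine ⟨(5,1), by decide, ?_⟩
           rintro ⟨u, v⟩ hy'
           simp only [myComm, commL, List.mem_cons, Prod.mk.injEq,
             List.not_mem_nil, or_false] at hy'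
           simp only [Prod.mk.injEq]
           omega)
  acyclic := by
    intro n h
    have key : ∀ a b, Relation.TransGen
        (fun m₀ m₁ => SuccEdge myΘ m₀ m₁ ∨ myComm m₀ m₁) a b → rank a < rank b := by
      intro a b hab
      induction hab with
      | single h => exact rank_mono h
      | tail _ h ih => exact lt_trans ih (rank_mono h)
    exact absurd (key n n h) (lt_irrefl _)

lemma isStrand_iff {s : ℕ} : myΘ.IsStrand s ↔ s < 6 := by
  simp [SSpaceT.IsStrand, myΘ]

/-- `tS` originates uniquely at node (0,0). -/
lemma uniq_tS : myΘ.Uniq tS (0, 0) := by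
  refine ⟨by decide, by decide, ?_⟩
  intro s i hs hO
  have hs6 : s < 6 := isStrand_iff.mp hs
  have hi : i < 3 := lt_of_lt_of_le hO.1 (len_le3 hs6)
  interval_cases s <;> interval_cases i <;> revert hO <;> decide

lemma non_gen (t : Msg)
    (h : ∀ s < 6, ∀ i < 3, ¬ OrigAt (myΘ.trace s) t i) :
    myΘ.Non t := by
  intro s hs i hO
  have hs6 : s < 6 := isStrand_iff.mp hs
  have hi : i < 3 := lt_of_lt_of_le hO.1 (len_le3 hs6)
  exact h s hs6 i hi hO

lemma non_tAi : myΘ.Non tAi := by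
  refine non_gen tAi ?_
  intro s hs i hi
  interval_cases s <;> interval_cases i <;> decide

lemma non_tBi : myΘ.Non (MTerm.akey 1 true) := by
  refine non_gen _ ?_
  intro s hs i hi
  interval_cases s <;> interval_cases i <;> decide

lemma empty_getD_mem {α : Type} {t : α} {L : List (Set α)} {i : ℕ}
    (hL : ∀ X ∈ L, X = ∅) (h : t ∈ L.getD i ∅) : False := by
  by_cases hi : i < L.length
  · have hmem : L.getD i ∅ ∈ L := by
      rw [List.getD_eq_getElem _ _ hi]; exact List.getElem_mem hi
    rw [hL _ hmem] at h; exact h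
  · rw [List.getD_eq_default _ _ (le_of_not_gt hi)] at h; exact h

/- Instantiation facts. -/
lemma inst0 : InstOf myΘ 0 (initItem tA tB' tS tD) := by
  refine ⟨by decide, by decide, by decide, ?_, ?_⟩
  · intro i hi t ht
    exact absurd ht (fun h => empty_getD_mem (by simp [initItem]) h)
  · intro i hi t ht
    have hi2 : i < 2 := by simpa [myΘ, SSpaceT.trace, C0] using hi
    interval_cases i
    · simp only [initItem, List.getD, List.getElem?_cons_zero, Option.getD_some,
        Set.mem_singleton_iff] at ht
      subst ht
      exact uniq_tS
    · simp only [initItem, List.getD, List.getElem?_cons_succ, List.getElem?_cons_zero,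
        Option.getD_some] at ht
      exact absurd ht (Set.notMem_empty t)

lemma instOf_noassum (s : ℕ) (r : RoleItemT Empty)
    (h1 : myΘ.IsStrand s) (h2 : (myΘ.trace s).length ≤ r.C.length)
    (h3 : r.C.take (myΘ.trace s).length = myΘ.trace s)
    (hN : ∀ X ∈ r.N, X = ∅) (hU : ∀ X ∈ r.U, X = ∅) :
    InstOf myΘ s r := by
  refine ⟨h1, h2, h3, ?_, ?_⟩
  · intro i _ t ht; exact absurd ht (fun h => empty_getD_mem hN h)
  · intro i _ t ht; exact absurd ht (fun h => empty_getD_mem hU h)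

lemma inst5 : InstOf myΘ 5 (respItem tA tB tS tD) :=
  instOf_noassum _ _ (by decide) (by decide) (by decide)
    (by simp [respItem]) (by simp [respItem])

lemma runOf : RunOf myBundle blanchetProt := by
  refine ⟨fun s => if s = 0 then initRole else if s = 1 then createRole
    else if s = 2 then decRole else if s = 3 then encRole
    else if s = 4 then createRole else respRole, ?_⟩
  intro s hs
  have hs6 : s < 6 := isStrand_iff.mp (show myΘ.IsStrand s from hs)
  interval_cases s
  · exact ⟨by simp [blanchetProt],
      initItem tA tB' tS tD, ⟨tA, tB', tS, tD, rfl, rfl, rfl, rfl, rfl⟩, inst0⟩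
  · refine ⟨by simp [blanchetProt], createItem tBi', ⟨tBi', Or.inl rfl, rfl⟩, ?_⟩
    exact instOf_noassum _ _ (by decide) (by decide) (by decide)
      (by simp [createItem]) (by simp [createItem])
  · refine ⟨by simp [blanchetProt], decItem tM tB',
      ⟨tM, tB', rfl, Or.inl rfl, rfl⟩, ?_⟩
    exact instOf_noassum _ _ (by decide) (by decide) (by decide)
      (by simp [decItem]) (by simp [decItem])
  · refine ⟨by simp [blanchetProt], encItem tM tB,
      ⟨tM, tB, rfl, Or.inl rfl, rfl⟩, ?_⟩
    exact instOf_noassum _ _ (by decide) (by decide) (by decide)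
      (by simp [encItem]) (by simp [encItem])
  · refine ⟨by simp [blanchetProt], createItem tB, ⟨tB, Or.inl rfl, rfl⟩, ?_⟩
    exact instOf_noassum _ _ (by decide) (by decide) (by decide)
      (by simp [createItem]) (by simp [createItem])
  · exact ⟨by simp [blanchetProt], respItem tA tB tS tD,
      ⟨tA, tB, tS, tD, rfl, rfl, rfl, rfl, rfl⟩, inst5⟩
/-- The authentication goal of the simple (Blanchet) example protocol is
false: there is a run of the protocol containing a full-length responder
strand with `a⁻¹` and `b⁻¹` non-originating, but no initiator strand of
height 1 that used the key `b` for its outer encryption. -/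
theorem blanchet_authentication_fails :
    ∃ (Υ : Bundle) (a b s d : Msg) (z : ℕ),
      RunOf Υ blanchetProt ∧
      SortA a ∧ SortA b ∧ SortS s ∧ SortD d ∧
      Υ.Θ.IsStrand z ∧
      Htin Υ.Θ z 2 (respItem a b s d) ∧
      Υ.Θ.Non (minv a) ∧ Υ.Θ.Non (minv b) ∧
      ¬ ∃ (a₀ s₀ d₀ : Msg) (z₀ : ℕ),
          SortA a₀ ∧ SortS s₀ ∧ SortD d₀ ∧ Υ.Θ.IsStrand z₀ ∧
          Htin Υ.Θ z₀ 1 (initItem a₀ b s₀ d₀) := by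
  refine ⟨myBundle, tA, tB, tS, tD, 5, runOf, rfl, rfl, rfl, rfl, by decide,
    ⟨by decide, inst5⟩, non_tAi, non_tBi, ?_⟩
  rintro ⟨a₀, s₀, d₀, z₀, hA, hS, hD, hz, hlen, hst, hle, htake, -, -⟩
  have hz6 : z₀ < 6 := isStrand_iff.mp hz
  interval_cases z₀ <;>
    simp [initItem, myBundle, myΘ, SSpaceT.trace, List.getD, C0, C1, C2, C3, C4, C5,
      tE1, tE2, tM, tB, tB', tBi', tS, tD, tAi, tDS] at htake
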